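/- Let Ω ⊆ ℝ² be open with coordinates (x,u) and let F : Ω → ℝ be smooth with ∂_x∂_u F(x₀,u₀) ≠ 0 at a point (x₀,u₀) ∈ Ω. Define I[F] at a point as ((F_{uux} − 2·F_u·F_{ux})·(F_x·F_{ux} + F_{uxx}))/F_{ux}³, where subscripts denote partial derivatives. Let α, β : ℝ → ℝ be smooth near x₀ and u₀ respectively with α'(x₀) ≠ 0 and β'(u₀) ≠ 0, and let C₁ ∈ ℝ satisfy C₁·β'(u)/α'(x)² > 0 for all (x,u) near (x₀,u₀). Suppose F̃ is a smooth function on a neighborhood of (α(x₀), β(u₀)) such that F̃(α(x), β(u)) = F(x,u) − ½·ln(C₁·β'(u)/α'(x)²) for all (x,u) near (x₀,u₀). Then F̃_{ux}(α(x₀), β(u₀)) ≠ 0 and I[F̃](α(x₀), β(u₀)) = I[F](x₀, u₀). -/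

import Mathlib

open Filter Topology

/-- Partial derivative in the `x`-direction (first coordinate). -/
noncomputable def pdX (f : ℝ × ℝ → ℝ) (p : ℝ × ℝ) : ℝ := fderiv ℝ f p (1, 0)

/-- Partial derivative in the `u`-direction (second coordinate). -/
noncomputable def pdU (f : ℝ × ℝ → ℝ) (p : ℝ × ℝ) : ℝ := fderiv ℝ f p (0, 1)

/-- `I[F] = ((F_{uux} − 2F_uF_{ux})·(F_xF_{ux} + F_{uxx}))/F_{ux}³`. -/
noncomputable def inv9 (F : ℝ × ℝ → ℝ) (p : ℝ × ℝ) : ℝ :=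
  ((pdX (pdU (pdU F)) p - 2 * pdU F p * pdX (pdU F) p) *
      (pdX F p * pdX (pdU F) p + pdX (pdX (pdU F)) p)) /
    (pdX (pdU F) p) ^ 3

section Toolbox

lemma hasFDerivAt_phi {α β : ℝ → ℝ} {x u a b : ℝ} (hα : HasDerivAt α a x)
    (hβ : HasDerivAt β b u) :
    HasFDerivAt (fun p : ℝ × ℝ => (α p.1, β p.2))
      ((a • (ContinuousLinearMap.fst ℝ ℝ ℝ)).prod (b • (ContinuousLinearMap.snd ℝ ℝ ℝ)))
      (x, u) := by
  exact (hα.comp_hasFDerivAt (x, u) hasFDerivAt_fst).prodMk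
    (hβ.comp_hasFDerivAt (x, u) hasFDerivAt_snd)

lemma pdX_comp {f : ℝ × ℝ → ℝ} {α β : ℝ → ℝ} {x u : ℝ}
    (hf : DifferentiableAt ℝ f (α x, β u)) (hα : DifferentiableAt ℝ α x)
    (hβ : DifferentiableAt ℝ β u) :
    pdX (fun p => f (α p.1, β p.2)) (x, u) = pdX f (α x, β u) * deriv α x := by
  have hΦ := hasFDerivAt_phi hα.hasDerivAt hβ.hasDerivAt
  have hc : HasFDerivAt (fun p : ℝ × ℝ => f (α p.1, β p.2))
      ((fderiv ℝ f (α x, β u)).comp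
        ((deriv α x • ContinuousLinearMap.fst ℝ ℝ ℝ).prod
          (deriv β u • ContinuousLinearMap.snd ℝ ℝ ℝ))) (x, u) :=
    hf.hasFDerivAt.comp (x, u) hΦ
  rw [pdX, hc.fderiv]
  have h10 : ((deriv α x • (ContinuousLinearMap.fst ℝ ℝ ℝ)).prod
      (deriv β u • (ContinuousLinearMap.snd ℝ ℝ ℝ))) (1, 0) = deriv α x • ((1:ℝ), (0:ℝ)) := by
    simp [Prod.smul_mk]
  rw [ContinuousLinearMap.comp_apply, h10, ContinuousLinearMap.map_smul]
  simp [pdX, mul_comm]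

lemma pdU_comp {f : ℝ × ℝ → ℝ} {α β : ℝ → ℝ} {x u : ℝ}
    (hf : DifferentiableAt ℝ f (α x, β u)) (hα : DifferentiableAt ℝ α x)
    (hβ : DifferentiableAt ℝ β u) :
    pdU (fun p => f (α p.1, β p.2)) (x, u) = pdU f (α x, β u) * deriv β u := by
  have hΦ := hasFDerivAt_phi hα.hasDerivAt hβ.hasDerivAt
  have hc : HasFDerivAt (fun p : ℝ × ℝ => f (α p.1, β p.2))
      ((fderiv ℝ f (α x, β u)).comp
        ((deriv α x • ContinuousLinearMap.fst ℝ ℝ ℝ).prod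
          (deriv β u • ContinuousLinearMap.snd ℝ ℝ ℝ))) (x, u) :=
    hf.hasFDerivAt.comp (x, u) hΦ
  rw [pdU, hc.fderiv]
  have h01 : ((deriv α x • (ContinuousLinearMap.fst ℝ ℝ ℝ)).prod
      (deriv β u • (ContinuousLinearMap.snd ℝ ℝ ℝ))) (0, 1) = deriv β u • ((0:ℝ), (1:ℝ)) := by
    simp [Prod.smul_mk]
  rw [ContinuousLinearMap.comp_apply, h01, ContinuousLinearMap.map_smul]
  simp [pdU, mul_comm]

lemma pdX_snd {g : ℝ → ℝ} {x u : ℝ} (hg : DifferentiableAt ℝ g u) :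
    pdX (fun p : ℝ × ℝ => g p.2) (x, u) = 0 := by
  have h : HasFDerivAt (fun p : ℝ × ℝ => g p.2) (deriv g u • ContinuousLinearMap.snd ℝ ℝ ℝ) (x, u) :=
    hg.hasDerivAt.comp_hasFDerivAt (x, u) (hasFDerivAt_snd (𝕜 := ℝ) (E := ℝ) (F := ℝ))
  rw [pdX, h.fderiv]; simp

lemma pdU_snd {g : ℝ → ℝ} {x u : ℝ} (hg : DifferentiableAt ℝ g u) :
    pdU (fun p : ℝ × ℝ => g p.2) (x, u) = deriv g u := by
  have h : HasFDerivAt (fun p : ℝ × ℝ => g p.2) (deriv g u • ContinuousLinearMap.snd ℝ ℝ ℝ) (x, u) :=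
    hg.hasDerivAt.comp_hasFDerivAt (x, u) (hasFDerivAt_snd (𝕜 := ℝ) (E := ℝ) (F := ℝ))
  rw [pdU, h.fderiv]; simp

lemma pdX_fst {g : ℝ → ℝ} {x u : ℝ} (hg : DifferentiableAt ℝ g x) :
    pdX (fun p : ℝ × ℝ => g p.1) (x, u) = deriv g x := by
  have h : HasFDerivAt (fun p : ℝ × ℝ => g p.1) (deriv g x • ContinuousLinearMap.fst ℝ ℝ ℝ) (x, u) :=
    hg.hasDerivAt.comp_hasFDerivAt (x, u) (hasFDerivAt_fst (𝕜 := ℝ) (E := ℝ) (F := ℝ))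
  rw [pdX, h.fderiv]; simp

lemma pdU_fst {g : ℝ → ℝ} {x u : ℝ} (hg : DifferentiableAt ℝ g x) :
    pdU (fun p : ℝ × ℝ => g p.1) (x, u) = 0 := by
  have h : HasFDerivAt (fun p : ℝ × ℝ => g p.1) (deriv g x • ContinuousLinearMap.fst ℝ ℝ ℝ) (x, u) :=
    hg.hasDerivAt.comp_hasFDerivAt (x, u) (hasFDerivAt_fst (𝕜 := ℝ) (E := ℝ) (F := ℝ))
  rw [pdU, h.fderiv]; simp

lemma pdX_add {f g : ℝ × ℝ → ℝ} {p : ℝ × ℝ} (hf : DifferentiableAt ℝ f p)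
    (hg : DifferentiableAt ℝ g p) :
    pdX (fun q => f q + g q) p = pdX f p + pdX g p := by
  rw [pdX, fderiv_fun_add hf hg]; rfl

lemma pdX_sub {f g : ℝ × ℝ → ℝ} {p : ℝ × ℝ} (hf : DifferentiableAt ℝ f p)
    (hg : DifferentiableAt ℝ g p) :
    pdX (fun q => f q - g q) p = pdX f p - pdX g p := by
  rw [pdX, fderiv_fun_sub hf hg]; rfl

lemma pdU_add {f g : ℝ × ℝ → ℝ} {p : ℝ × ℝ} (hf : DifferentiableAt ℝ f p)
    (hg : DifferentiableAt ℝ g p) :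
    pdU (fun q => f q + g q) p = pdU f p + pdU g p := by
  rw [pdU, fderiv_fun_add hf hg]; rfl

lemma pdU_sub {f g : ℝ × ℝ → ℝ} {p : ℝ × ℝ} (hf : DifferentiableAt ℝ f p)
    (hg : DifferentiableAt ℝ g p) :
    pdU (fun q => f q - g q) p = pdU f p - pdU g p := by
  rw [pdU, fderiv_fun_sub hf hg]; rfl

lemma pdX_mul {f g : ℝ × ℝ → ℝ} {p : ℝ × ℝ} (hf : DifferentiableAt ℝ f p)
    (hg : DifferentiableAt ℝ g p) :
    pdX (fun q => f q * g q) p = pdX f p * g p + f p * pdX g p := by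
  rw [pdX, fderiv_fun_mul hf hg]; simp [pdX, mul_comm]; ring

lemma pdU_mul {f g : ℝ × ℝ → ℝ} {p : ℝ × ℝ} (hf : DifferentiableAt ℝ f p)
    (hg : DifferentiableAt ℝ g p) :
    pdU (fun q => f q * g q) p = pdU f p * g p + f p * pdU g p := by
  rw [pdU, fderiv_fun_mul hf hg]; simp [pdU, mul_comm]; ring

lemma pdX_congr_ev {f g : ℝ × ℝ → ℝ} {p : ℝ × ℝ} (h : f =ᶠ[𝓝 p] g) :
    pdX f =ᶠ[𝓝 p] pdX g := (h.fderiv (𝕜 := ℝ)).mono fun q hq => by simp only [pdX, hq]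

lemma pdU_congr_ev {f g : ℝ × ℝ → ℝ} {p : ℝ × ℝ} (h : f =ᶠ[𝓝 p] g) :
    pdU f =ᶠ[𝓝 p] pdU g := (h.fderiv (𝕜 := ℝ)).mono fun q hq => by simp only [pdU, hq]

lemma pdX_congr {f g : ℝ × ℝ → ℝ} {p : ℝ × ℝ} (h : f =ᶠ[𝓝 p] g) :
    pdX f p = pdX g p := by rw [pdX, pdX, h.fderiv_eq]

lemma pdU_congr {f g : ℝ × ℝ → ℝ} {p : ℝ × ℝ} (h : f =ᶠ[𝓝 p] g) :
    pdU f p = pdU g p := by rw [pdU, pdU, h.fderiv_eq]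

lemma pdX_contDiffAt {f : ℝ × ℝ → ℝ} {p : ℝ × ℝ} {n m : WithTop ℕ∞}
    (hf : ContDiffAt ℝ m f p) (h : n + 1 ≤ m) : ContDiffAt ℝ n (pdX f) p :=
  (hf.fderiv_right h).clm_apply contDiffAt_const

lemma pdU_contDiffAt {f : ℝ × ℝ → ℝ} {p : ℝ × ℝ} {n m : WithTop ℕ∞}
    (hf : ContDiffAt ℝ m f p) (h : n + 1 ≤ m) : ContDiffAt ℝ n (pdU f) p :=
  (hf.fderiv_right h).clm_apply contDiffAt_const

lemma deriv_contDiffAt' {f : ℝ → ℝ} {x : ℝ} {n m : WithTop ℕ∞}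
    (hf : ContDiffAt ℝ m f x) (h : n + 1 ≤ m) :
    ContDiffAt ℝ n (deriv f) x := by
  have h' := (hf.fderiv_right h).clm_apply (contDiffAt_const (c := (1:ℝ)))
  exact h'.congr_of_eventuallyEq (Eventually.of_forall fun y => (fderiv_apply_one_eq_deriv).symm)

lemma diff_comp {f : ℝ × ℝ → ℝ} {α β : ℝ → ℝ} {x u : ℝ}
    (hf : DifferentiableAt ℝ f (α x, β u)) (hα : DifferentiableAt ℝ α x)
    (hβ : DifferentiableAt ℝ β u) :
    DifferentiableAt ℝ (fun p : ℝ × ℝ => f (α p.1, β p.2)) (x, u) :=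
  hf.comp (x, u) ((hα.comp (x, u) differentiableAt_fst).prodMk
    (hβ.comp (x, u) differentiableAt_snd))

lemma diff_snd {g : ℝ → ℝ} {x u : ℝ} (hg : DifferentiableAt ℝ g u) :
    DifferentiableAt ℝ (fun p : ℝ × ℝ => g p.2) (x, u) :=
  hg.comp (x, u) differentiableAt_snd

lemma diff_fst {g : ℝ → ℝ} {x u : ℝ} (hg : DifferentiableAt ℝ g x) :
    DifferentiableAt ℝ (fun p : ℝ × ℝ => g p.1) (x, u) :=
  hg.comp (x, u) differentiableAt_fst

end Toolbox

/-- Invariance of `I` under the Lie pseudogroup action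
`(x, u, F) ↦ (α(x), β(u), F∘(α⁻¹,β⁻¹) − ½ ln(C₁β'/α'²))`. -/
theorem stmt_9 (Ω : Set (ℝ × ℝ)) (hΩ : IsOpen Ω) (x₀ u₀ : ℝ) (hmem : (x₀, u₀) ∈ Ω)
    (F : ℝ × ℝ → ℝ) (hF : ContDiffOn ℝ (⊤ : ℕ∞) F Ω)
    (hFxu : pdX (pdU F) (x₀, u₀) ≠ 0)
    (α β : ℝ → ℝ) (hα : ContDiffAt ℝ (⊤ : ℕ∞) α x₀) (hβ : ContDiffAt ℝ (⊤ : ℕ∞) β u₀)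
    (hα' : deriv α x₀ ≠ 0) (hβ' : deriv β u₀ ≠ 0)
    (C₁ : ℝ)
    (hpos : ∀ᶠ p : ℝ × ℝ in nhds (x₀, u₀), 0 < C₁ * deriv β p.2 / (deriv α p.1) ^ 2)
    (Ft : ℝ × ℝ → ℝ) (hFt : ContDiffAt ℝ (⊤ : ℕ∞) Ft (α x₀, β u₀))
    (hrel : ∀ᶠ p : ℝ × ℝ in nhds (x₀, u₀),
      Ft (α p.1, β p.2) = F p - (1 / 2) * Real.log (C₁ * deriv β p.2 / (deriv α p.1) ^ 2)) :
    pdX (pdU Ft) (α x₀, β u₀) ≠ 0 ∧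
      inv9 Ft (α x₀, β u₀) = inv9 F (x₀, u₀) := by
  have htop : ((⊤:ℕ∞) : WithTop ℕ∞) + 1 ≤ ((⊤:ℕ∞) : WithTop ℕ∞) := by exact_mod_cast le_top
  have hone : ((⊤:ℕ∞) : WithTop ℕ∞) ≠ 0 := by simp
  have h5top : ((5:ℕ∞) : WithTop ℕ∞) ≤ ((⊤:ℕ∞) : WithTop ℕ∞) := by exact_mod_cast le_top
  have h15 : ((5:ℕ∞) : WithTop ℕ∞) ≠ 0 := by simp
  have h45 : ((4:ℕ∞) : WithTop ℕ∞) + 1 ≤ ((5:ℕ∞) : WithTop ℕ∞) := by norm_num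
  have h14 : ((4:ℕ∞) : WithTop ℕ∞) ≠ 0 := by simp
  -- basic values
  set A := deriv α x₀ with hA
  set B := deriv β u₀ with hB
  set A₂ := deriv (deriv α) x₀ with hA₂
  set B₂ := deriv (deriv β) u₀ with hB₂
  -- positivity facts
  have hA2pos : (0:ℝ) < A ^ 2 := by positivity
  have hCB : 0 < C₁ * B := by
    have h0 := hpos.self_of_nhds
    have h1 : 0 < (C₁ * deriv β (x₀, u₀).2 / (deriv α (x₀, u₀).1) ^ 2) * A ^ 2 :=
      mul_pos h0 hA2pos
    have h2 : (C₁ * deriv β (x₀, u₀).2 / (deriv α (x₀, u₀).1) ^ 2) * A ^ 2 = C₁ * B :=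
      div_mul_cancel₀ _ (ne_of_gt hA2pos)
    rwa [h2] at h1
  have hC₁ : C₁ ≠ 0 := by
    intro h; rw [h] at hCB; simp at hCB
  -- derivative smoothness
  have hαd : ContDiffAt ℝ (⊤:ℕ∞) (deriv α) x₀ := deriv_contDiffAt' hα htop
  have hβd : ContDiffAt ℝ (⊤:ℕ∞) (deriv β) u₀ := deriv_contDiffAt' hβ htop
  -- the two one-variable log functions
  set gl : ℝ → ℝ := fun x => (1/2 : ℝ) * Real.log ((deriv α x) ^ 2) with hgl_def
  set hl : ℝ → ℝ := fun u => (1/2 : ℝ) * Real.log (C₁ * deriv β u) with hhl_def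
  have hgl : ContDiffAt ℝ (⊤:ℕ∞) gl x₀ :=
    contDiffAt_const.mul ((hαd.pow 2).log (pow_ne_zero 2 hα'))
  have hhl : ContDiffAt ℝ (⊤:ℕ∞) hl u₀ :=
    contDiffAt_const.mul ((contDiffAt_const.mul hβd).log (ne_of_gt hCB))
  -- derivative values of gl, hl
  have hda : HasDerivAt (deriv α) A₂ x₀ := (hαd.differentiableAt hone).hasDerivAt
  have hdb : HasDerivAt (deriv β) B₂ u₀ := (hβd.differentiableAt hone).hasDerivAt
  have dgl : deriv gl x₀ = A₂ / A := by
    have h2 : HasDerivAt (fun x => (deriv α x) ^ 2) (2 * A * A₂) x₀ := by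
      simpa [← hA, mul_comm, mul_assoc, mul_left_comm] using hda.fun_pow 2
    have h3 := (h2.log (pow_ne_zero 2 hα')).const_mul (1/2 : ℝ)
    rw [show gl = fun x => (1/2 : ℝ) * Real.log ((deriv α x) ^ 2) from rfl]
    rw [h3.deriv]
    rw [← hA]
    field_simp
  have dhl : deriv hl u₀ = B₂ / (2 * B) := by
    have h2 : HasDerivAt (fun u => C₁ * deriv β u) (C₁ * B₂) u₀ := hdb.const_mul C₁
    have h3 := (h2.log (ne_of_gt hCB)).const_mul (1/2 : ℝ)
    rw [show hl = fun u => (1/2 : ℝ) * Real.log (C₁ * deriv β u) from rfl]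
    rw [h3.deriv]
    rw [← hB]
    have hBne : B ≠ 0 := hβ'
    field_simp
  -- tendsto facts
  have tfst : Tendsto (fun p : ℝ × ℝ => p.1) (𝓝 (x₀, u₀)) (𝓝 x₀) := continuousAt_fst
  have tsnd : Tendsto (fun p : ℝ × ℝ => p.2) (𝓝 (x₀, u₀)) (𝓝 u₀) := continuousAt_snd
  have tΦ : Tendsto (fun p : ℝ × ℝ => (α p.1, β p.2)) (𝓝 (x₀, u₀)) (𝓝 (α x₀, β u₀)) :=
    (ContinuousAt.prodMk (hα.continuousAt.comp continuousAt_fst)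
      (hβ.continuousAt.comp continuousAt_snd))
  -- eventual smoothness / nonvanishing, pulled back to the plane
  have evF : ∀ᶠ p in 𝓝 (x₀, u₀), ContDiffAt ℝ (⊤:ℕ∞) F p := by
    filter_upwards [hΩ.mem_nhds hmem] with p hp using hF.contDiffAt (hΩ.mem_nhds hp)
  have evα : ∀ᶠ p : ℝ × ℝ in 𝓝 (x₀, u₀), ContDiffAt ℝ (5:ℕ∞) α p.1 :=
    tfst.eventually ((hα.of_le h5top).eventually (by norm_num))
  have evβ : ∀ᶠ p : ℝ × ℝ in 𝓝 (x₀, u₀), ContDiffAt ℝ (5:ℕ∞) β p.2 :=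
    tsnd.eventually ((hβ.of_le h5top).eventually (by norm_num))
  have evFt : ∀ᶠ p : ℝ × ℝ in 𝓝 (x₀, u₀), ContDiffAt ℝ (5:ℕ∞) Ft (α p.1, β p.2) :=
    tΦ.eventually ((hFt.of_le h5top).eventually (by norm_num))
  have evgl : ∀ᶠ p : ℝ × ℝ in 𝓝 (x₀, u₀), ContDiffAt ℝ (5:ℕ∞) gl p.1 :=
    tfst.eventually ((hgl.of_le h5top).eventually (by norm_num))
  have evhl : ∀ᶠ p : ℝ × ℝ in 𝓝 (x₀, u₀), ContDiffAt ℝ (5:ℕ∞) hl p.2 :=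
    tsnd.eventually ((hhl.of_le h5top).eventually (by norm_num))
  have evαne : ∀ᶠ p : ℝ × ℝ in 𝓝 (x₀, u₀), deriv α p.1 ≠ 0 :=
    tfst.eventually (hαd.continuousAt.eventually_ne hα')
  have evβC : ∀ᶠ p : ℝ × ℝ in 𝓝 (x₀, u₀), C₁ * deriv β p.2 ≠ 0 :=
    tsnd.eventually ((continuousAt_const.mul hβd.continuousAt).eventually_ne (ne_of_gt hCB))
  -- the two expressions for the transformed function
  have hHR : (fun p : ℝ × ℝ => Ft (α p.1, β p.2)) =ᶠ[𝓝 (x₀, u₀)]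
      fun p => F p - hl p.2 + gl p.1 := by
    filter_upwards [hrel, evβC, evαne] with p h1 h2 h3
    have h4 : ((deriv α p.1) ^ 2) ≠ 0 := pow_ne_zero 2 h3
    rw [h1, Real.log_div h2 h4]
    simp only [hhl_def, hgl_def]
    ring
  -- ===== derivatives of the H side =====
  have ev1 : pdU (fun p : ℝ × ℝ => Ft (α p.1, β p.2)) =ᶠ[𝓝 (x₀, u₀)]
      fun p => pdU Ft (α p.1, β p.2) * deriv β p.2 := by
    filter_upwards [evFt, evα, evβ] with p hftp hax hbu
    obtain ⟨x, u⟩ := p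
    exact pdU_comp (hftp.differentiableAt h15) (hax.differentiableAt h15)
      (hbu.differentiableAt h15)
  have ev2 : pdX (pdU (fun p : ℝ × ℝ => Ft (α p.1, β p.2))) =ᶠ[𝓝 (x₀, u₀)]
      fun p => pdX (pdU Ft) (α p.1, β p.2) * deriv α p.1 * deriv β p.2 := by
    refine (pdX_congr_ev ev1).trans ?_
    filter_upwards [evFt, evα, evβ] with p hftp hax hbu
    obtain ⟨x, u⟩ := p
    have h4 : ContDiffAt ℝ (4:ℕ∞) (pdU Ft) (α x, β u) := pdU_contDiffAt hftp h45
    have dpdUFt : DifferentiableAt ℝ (pdU Ft) (α x, β u) := h4.differentiableAt h14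
    have dα1 : DifferentiableAt ℝ α x := hax.differentiableAt h15
    have dβ1 : DifferentiableAt ℝ β u := hbu.differentiableAt h15
    have ddb : DifferentiableAt ℝ (deriv β) u :=
      (deriv_contDiffAt' hbu h45).differentiableAt h14
    have dfU : DifferentiableAt ℝ (fun q : ℝ × ℝ => pdU Ft (α q.1, β q.2)) (x, u) :=
      diff_comp dpdUFt dα1 dβ1
    have dgB : DifferentiableAt ℝ (fun q : ℝ × ℝ => deriv β q.2) (x, u) := diff_snd ddb
    show pdX (fun q : ℝ × ℝ => pdU Ft (α q.1, β q.2) * deriv β q.2) (x, u) = _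
    rw [pdX_mul dfU dgB, pdX_comp dpdUFt dα1 dβ1, pdX_snd ddb]
    ring
  have ev3 : pdU (pdU (fun p : ℝ × ℝ => Ft (α p.1, β p.2))) =ᶠ[𝓝 (x₀, u₀)]
      fun p => pdU (pdU Ft) (α p.1, β p.2) * deriv β p.2 * deriv β p.2
        + pdU Ft (α p.1, β p.2) * deriv (deriv β) p.2 := by
    refine (pdU_congr_ev ev1).trans ?_
    filter_upwards [evFt, evα, evβ] with p hftp hax hbu
    obtain ⟨x, u⟩ := p
    have h4 : ContDiffAt ℝ (4:ℕ∞) (pdU Ft) (α x, β u) := pdU_contDiffAt hftp h45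
    have dpdUFt : DifferentiableAt ℝ (pdU Ft) (α x, β u) := h4.differentiableAt h14
    have dα1 : DifferentiableAt ℝ α x := hax.differentiableAt h15
    have dβ1 : DifferentiableAt ℝ β u := hbu.differentiableAt h15
    have ddb : DifferentiableAt ℝ (deriv β) u :=
      (deriv_contDiffAt' hbu h45).differentiableAt h14
    have dfU : DifferentiableAt ℝ (fun q : ℝ × ℝ => pdU Ft (α q.1, β q.2)) (x, u) :=
      diff_comp dpdUFt dα1 dβ1
    have dgB : DifferentiableAt ℝ (fun q : ℝ × ℝ => deriv β q.2) (x, u) := diff_snd ddb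
    show pdU (fun q : ℝ × ℝ => pdU Ft (α q.1, β q.2) * deriv β q.2) (x, u) = _
    rw [pdU_mul dfU dgB, pdU_comp dpdUFt dα1 dβ1, pdU_snd ddb]
  -- differentiability at the base points
  have dα1 : DifferentiableAt ℝ α x₀ := hα.differentiableAt hone
  have dβ1 : DifferentiableAt ℝ β u₀ := hβ.differentiableAt hone
  have dda : DifferentiableAt ℝ (deriv α) x₀ := hαd.differentiableAt hone
  have ddb : DifferentiableAt ℝ (deriv β) u₀ := hβd.differentiableAt hone
  have dda2 : DifferentiableAt ℝ (deriv (deriv α)) x₀ :=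
    (deriv_contDiffAt' hαd htop).differentiableAt hone
  have ddb2 : DifferentiableAt ℝ (deriv (deriv β)) u₀ :=
    (deriv_contDiffAt' hβd htop).differentiableAt hone
  have cpdUFt : ContDiffAt ℝ (⊤:ℕ∞) (pdU Ft) (α x₀, β u₀) := pdU_contDiffAt hFt htop
  have cpdUpdUFt : ContDiffAt ℝ (⊤:ℕ∞) (pdU (pdU Ft)) (α x₀, β u₀) :=
    pdU_contDiffAt cpdUFt htop
  have cpdXpdUFt : ContDiffAt ℝ (⊤:ℕ∞) (pdX (pdU Ft)) (α x₀, β u₀) :=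
    pdX_contDiffAt cpdUFt htop
  have DFt : DifferentiableAt ℝ Ft (α x₀, β u₀) := hFt.differentiableAt hone
  have DpdUFt : DifferentiableAt ℝ (pdU Ft) (α x₀, β u₀) := cpdUFt.differentiableAt hone
  have DpdUpdUFt : DifferentiableAt ℝ (pdU (pdU Ft)) (α x₀, β u₀) :=
    cpdUpdUFt.differentiableAt hone
  have DpdXpdUFt : DifferentiableAt ℝ (pdX (pdU Ft)) (α x₀, β u₀) :=
    cpdXpdUFt.differentiableAt hone
  -- point values for the H side
  have eH1 : pdU (fun p : ℝ × ℝ => Ft (α p.1, β p.2)) (x₀, u₀) = pdU Ft (α x₀, β u₀) * B :=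
    ev1.self_of_nhds
  have eH2 : pdX (fun p : ℝ × ℝ => Ft (α p.1, β p.2)) (x₀, u₀) = pdX Ft (α x₀, β u₀) * A :=
    pdX_comp DFt dα1 dβ1
  have eH3 : pdX (pdU (fun p : ℝ × ℝ => Ft (α p.1, β p.2))) (x₀, u₀)
      = pdX (pdU Ft) (α x₀, β u₀) * A * B := ev2.self_of_nhds
  have eH4 : pdX (pdU (pdU (fun p : ℝ × ℝ => Ft (α p.1, β p.2)))) (x₀, u₀)
      = pdX (pdU (pdU Ft)) (α x₀, β u₀) * A * B * B
        + pdX (pdU Ft) (α x₀, β u₀) * A * B₂ := by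
    rw [pdX_congr ev3]
    have d1 : DifferentiableAt ℝ (fun q : ℝ × ℝ => pdU (pdU Ft) (α q.1, β q.2)) (x₀, u₀) :=
      diff_comp DpdUpdUFt dα1 dβ1
    have d2 : DifferentiableAt ℝ (fun q : ℝ × ℝ => deriv β q.2) (x₀, u₀) := diff_snd ddb
    have d3 : DifferentiableAt ℝ (fun q : ℝ × ℝ => pdU Ft (α q.1, β q.2)) (x₀, u₀) :=
      diff_comp DpdUFt dα1 dβ1
    have d4 : DifferentiableAt ℝ (fun q : ℝ × ℝ => deriv (deriv β) q.2) (x₀, u₀) :=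
      diff_snd ddb2
    rw [pdX_add ((d1.fun_mul d2).fun_mul d2) (d3.fun_mul d4), pdX_mul (d1.fun_mul d2) d2,
      pdX_mul d1 d2, pdX_mul d3 d4, pdX_comp DpdUpdUFt dα1 dβ1, pdX_comp DpdUFt dα1 dβ1,
      pdX_snd ddb, pdX_snd ddb2]
    ring
  have eH5 : pdX (pdX (pdU (fun p : ℝ × ℝ => Ft (α p.1, β p.2)))) (x₀, u₀)
      = pdX (pdX (pdU Ft)) (α x₀, β u₀) * A * A * B
        + pdX (pdU Ft) (α x₀, β u₀) * A₂ * B := by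
    rw [pdX_congr ev2]
    have d1 : DifferentiableAt ℝ (fun q : ℝ × ℝ => pdX (pdU Ft) (α q.1, β q.2)) (x₀, u₀) :=
      diff_comp DpdXpdUFt dα1 dβ1
    have d2 : DifferentiableAt ℝ (fun q : ℝ × ℝ => deriv α q.1) (x₀, u₀) := diff_fst dda
    have d3 : DifferentiableAt ℝ (fun q : ℝ × ℝ => deriv β q.2) (x₀, u₀) := diff_snd ddb
    rw [pdX_mul (d1.fun_mul d2) d3, pdX_mul d1 d2, pdX_comp DpdXpdUFt dα1 dβ1,
      pdX_fst dda, pdX_snd ddb]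
    ring
  -- ===== derivatives of the RHS side =====
  have hF₀ : ContDiffAt ℝ (⊤:ℕ∞) F (x₀, u₀) := hF.contDiffAt (hΩ.mem_nhds hmem)
  have evR1 : pdU (fun p : ℝ × ℝ => F p - hl p.2 + gl p.1) =ᶠ[𝓝 (x₀, u₀)]
      fun p => pdU F p - deriv hl p.2 := by
    filter_upwards [evF, evhl, evgl] with p hFp hhlp hglp
    obtain ⟨x, u⟩ := p
    have d1 : DifferentiableAt ℝ F (x, u) := hFp.differentiableAt hone
    have d2 : DifferentiableAt ℝ (fun q : ℝ × ℝ => hl q.2) (x, u) :=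
      diff_snd (hhlp.differentiableAt h15)
    have d3 : DifferentiableAt ℝ (fun q : ℝ × ℝ => gl q.1) (x, u) :=
      diff_fst (hglp.differentiableAt h15)
    rw [pdU_add (d1.fun_sub d2) d3, pdU_sub d1 d2, pdU_snd (hhlp.differentiableAt h15),
      pdU_fst (hglp.differentiableAt h15)]
    ring
  have evR1' : pdU (pdU (fun p : ℝ × ℝ => F p - hl p.2 + gl p.1)) =ᶠ[𝓝 (x₀, u₀)]
      fun p => pdU (pdU F) p - deriv (deriv hl) p.2 := by
    refine (pdU_congr_ev evR1).trans ?_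
    filter_upwards [evF, evhl] with p hFp hhlp
    obtain ⟨x, u⟩ := p
    have d1 : DifferentiableAt ℝ (pdU F) (x, u) :=
      (pdU_contDiffAt hFp htop).differentiableAt hone
    have ddl : DifferentiableAt ℝ (deriv hl) u :=
      (deriv_contDiffAt' hhlp h45).differentiableAt h14
    have d2 : DifferentiableAt ℝ (fun q : ℝ × ℝ => deriv hl q.2) (x, u) := diff_snd ddl
    rw [pdU_sub d1 d2, pdU_snd ddl]
  have evR2' : pdX (pdU (fun p : ℝ × ℝ => F p - hl p.2 + gl p.1)) =ᶠ[𝓝 (x₀, u₀)]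
      pdX (pdU F) := by
    refine (pdX_congr_ev evR1).trans ?_
    filter_upwards [evF, evhl] with p hFp hhlp
    obtain ⟨x, u⟩ := p
    have d1 : DifferentiableAt ℝ (pdU F) (x, u) :=
      (pdU_contDiffAt hFp htop).differentiableAt hone
    have ddl : DifferentiableAt ℝ (deriv hl) u :=
      (deriv_contDiffAt' hhlp h45).differentiableAt h14
    have d2 : DifferentiableAt ℝ (fun q : ℝ × ℝ => deriv hl q.2) (x, u) := diff_snd ddl
    show pdX (fun q : ℝ × ℝ => pdU F q - deriv hl q.2) (x, u) = _
    rw [pdX_sub d1 d2, pdX_snd ddl]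
    ring
  -- point values for the RHS side
  have DF₀ : DifferentiableAt ℝ F (x₀, u₀) := hF₀.differentiableAt hone
  have Dhl : DifferentiableAt ℝ hl u₀ := hhl.differentiableAt hone
  have Dgl : DifferentiableAt ℝ gl x₀ := hgl.differentiableAt hone
  have DpdUpdUF : DifferentiableAt ℝ (pdU (pdU F)) (x₀, u₀) :=
    (pdU_contDiffAt (pdU_contDiffAt hF₀ htop) htop).differentiableAt hone
  have Ddhl2 : DifferentiableAt ℝ (deriv (deriv hl)) u₀ :=
    (deriv_contDiffAt' (deriv_contDiffAt' hhl htop) htop).differentiableAt hone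
  have eR2 : pdX (fun p : ℝ × ℝ => F p - hl p.2 + gl p.1) (x₀, u₀)
      = pdX F (x₀, u₀) + deriv gl x₀ := by
    have d2 : DifferentiableAt ℝ (fun q : ℝ × ℝ => hl q.2) (x₀, u₀) := diff_snd Dhl
    have d3 : DifferentiableAt ℝ (fun q : ℝ × ℝ => gl q.1) (x₀, u₀) := diff_fst Dgl
    rw [pdX_add (DF₀.fun_sub d2) d3, pdX_sub DF₀ d2, pdX_snd Dhl, pdX_fst Dgl]
    ring
  have eR4 : pdX (pdU (pdU (fun p : ℝ × ℝ => F p - hl p.2 + gl p.1))) (x₀, u₀)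
      = pdX (pdU (pdU F)) (x₀, u₀) := by
    rw [pdX_congr evR1']
    have d2 : DifferentiableAt ℝ (fun q : ℝ × ℝ => deriv (deriv hl) q.2) (x₀, u₀) :=
      diff_snd Ddhl2
    rw [pdX_sub DpdUpdUF d2, pdX_snd Ddhl2]
    ring
  have eR5 : pdX (pdX (pdU (fun p : ℝ × ℝ => F p - hl p.2 + gl p.1))) (x₀, u₀)
      = pdX (pdX (pdU F)) (x₀, u₀) := pdX_congr evR2'
  have eR1 : pdU (fun p : ℝ × ℝ => F p - hl p.2 + gl p.1) (x₀, u₀)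
      = pdU F (x₀, u₀) - deriv hl u₀ := evR1.self_of_nhds
  -- ===== combine via hHR =====
  have c1 : pdU Ft (α x₀, β u₀) * B = pdU F (x₀, u₀) - deriv hl u₀ := by
    rw [← eH1, ← eR1]; exact pdU_congr hHR
  have c2 : pdX Ft (α x₀, β u₀) * A = pdX F (x₀, u₀) + deriv gl x₀ := by
    rw [← eH2, ← eR2]; exact pdX_congr hHR
  have c3 : pdX (pdU Ft) (α x₀, β u₀) * A * B = pdX (pdU F) (x₀, u₀) := by
    rw [← eH3]
    have := pdX_congr (pdU_congr_ev hHR)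
    rw [this]
    exact evR2'.self_of_nhds
  have c4 : pdX (pdU (pdU Ft)) (α x₀, β u₀) * A * B * B
      + pdX (pdU Ft) (α x₀, β u₀) * A * B₂ = pdX (pdU (pdU F)) (x₀, u₀) := by
    rw [← eH4, ← eR4]
    exact pdX_congr (pdU_congr_ev (pdU_congr_ev hHR))
  have c5 : pdX (pdX (pdU Ft)) (α x₀, β u₀) * A * A * B
      + pdX (pdU Ft) (α x₀, β u₀) * A₂ * B = pdX (pdX (pdU F)) (x₀, u₀) := by
    rw [← eH5, ← eR5]
    exact pdX_congr (pdX_congr_ev (pdU_congr_ev hHR))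
  -- conclusion
  have hPt : pdX (pdU Ft) (α x₀, β u₀) ≠ 0 := by
    intro h
    apply hFxu
    rw [← c3, h]; ring
  refine ⟨hPt, ?_⟩
  have c1' : pdU F (x₀, u₀) = pdU Ft (α x₀, β u₀) * B + B₂ / (2 * B) := by
    rw [← dhl]; linarith [c1]
  have c2' : pdX F (x₀, u₀) = pdX Ft (α x₀, β u₀) * A - A₂ / A := by
    rw [← dgl]; linarith [c2]
  rw [inv9, inv9, ← c3, ← c4, ← c5, c1', c2']
  have hBne : B ≠ 0 := hβ'
  field_simp
  ring
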